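/- Let E be a directed graph, A a C*-algebra, {S_e, P_v} a Cuntz-Krieger E-family in A, and H ⊆ E⁰ a hereditary subset. Let C*(S, P) denote the C*-subalgebra of A generated by {S_e : e ∈ E¹} ∪ {P_v : v ∈ E⁰}. Then the closed two-sided ideal of C*(S, P) generated by {P_v : v ∈ H} equals the closed linear span of {S_α P_v S_β* : α, β paths in E, v ∈ H, r(α) = r(β) = v}. -/

import Mathlib

/-- A (countable) directed graph `E = (E⁰, E¹, r, s)`:
a set of vertices, a set of edges, and range and source maps. -/
structure Digraph' where
  V : Type
  E : Type
  src : E → V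
  rng : E → V

namespace Digraph'

variable (G : Digraph')

/-- `v ≥ w`: there is a path (possibly of length zero) from `v` to `w`. -/
def Reach (v w : G.V) : Prop :=
  Relation.ReflTransGen (fun a b : G.V => ∃ e : G.E, G.src e = a ∧ G.rng e = b) v w

/-- A set `H` of vertices is hereditary if `v ∈ H` and `v ≥ w` imply `w ∈ H`. -/
def Hereditary (H : Set G.V) : Prop :=
  ∀ ⦃v w : G.V⦄, v ∈ H → G.Reach v w → w ∈ H

/-- A set `X` of vertices is saturated if every vertex `v` with `0 < |s⁻¹(v)| < ∞`
all of whose emitted edges have range in `X` itself belongs to `X`. -/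
def Saturated (X : Set G.V) : Prop :=
  ∀ v : G.V, (G.src ⁻¹' {v}).Finite → (G.src ⁻¹' {v}).Nonempty →
    (∀ e : G.E, G.src e = v → G.rng e ∈ X) → v ∈ X

/-- The saturation `Σ(X)`: the smallest saturated set containing `X`. -/
def saturation (X : Set G.V) : Set G.V :=
  ⋂₀ {Y : Set G.V | G.Saturated Y ∧ X ⊆ Y}

/-- `ΣH(X)`: the smallest saturated hereditary set containing `X`. -/
def satHered (X : Set G.V) : Set G.V :=
  ⋂₀ {Y : Set G.V | G.Saturated Y ∧ G.Hereditary Y ∧ X ⊆ Y}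

end Digraph'

namespace Digraph'

/-- A Cuntz-Krieger `E`-family in a C*-algebra `A`: mutually orthogonal projections
`P v`, elements `S e` with mutually orthogonal range projections, satisfying the
Cuntz-Krieger relations (G1)–(G3). -/
structure IsCKFamily (G : Digraph') {A : Type*} [NonUnitalCStarAlgebra A]
    [PartialOrder A] [StarOrderedRing A] (P : G.V → A) (S : G.E → A) : Prop where
  proj_star : ∀ v : G.V, star (P v) = P v
  proj_idem : ∀ v : G.V, P v * P v = P v
  proj_orth : ∀ v w : G.V, v ≠ w → P v * P w = 0
  range_orth : ∀ e f : G.E, e ≠ f → (S e * star (S e)) * (S f * star (S f)) = 0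
  ck1 : ∀ e : G.E, star (S e) * S e = P (G.rng e)
  ck2 : ∀ e : G.E, S e * star (S e) ≤ P (G.src e)
  ck3 : ∀ v : G.V, (G.src ⁻¹' {v}).Finite → (G.src ⁻¹' {v}).Nonempty →
    P v = ∑ᶠ e ∈ G.src ⁻¹' {v}, S e * star (S e)

end Digraph'

/-- `J` is a closed two-sided ideal of the subalgebra (given as the subset `B`)
of the ambient C*-algebra. -/
def IsClosedIdealOf {A : Type*} [NonUnitalCStarAlgebra A] (B J : Set A) : Prop :=
  J ⊆ B ∧ IsClosed J ∧ (0 : A) ∈ J ∧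
  (∀ a b : A, a ∈ J → b ∈ J → a + b ∈ J) ∧
  (∀ (c : ℂ) (a : A), a ∈ J → c • a ∈ J) ∧
  (∀ b a : A, b ∈ B → a ∈ J → b * a ∈ J ∧ a * b ∈ J)

/-- The closed two-sided ideal of the subalgebra `B` generated by a subset `X`. -/
def closedIdealGenIn {A : Type*} [NonUnitalCStarAlgebra A] (B X : Set A) : Set A :=
  ⋂₀ {J : Set A | IsClosedIdealOf B J ∧ X ⊆ J}

/-- The C*-subalgebra `C*(S, P)` of `A` generated by a Cuntz-Krieger family,
regarded as a subset of `A`: the closure of the non-unital star subalgebra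
generated by the `S e` and the `P v`. -/
def cstarSP {A : Type*} [NonUnitalCStarAlgebra A] (G : Digraph')
    (P : G.V → A) (S : G.E → A) : Set A :=
  closure ((NonUnitalStarAlgebra.adjoin ℂ (Set.range S ∪ Set.range P) :
    NonUnitalStarSubalgebra ℂ A) : Set A)

namespace Digraph'

variable (G : Digraph')

/-- `IsPathFrom v l`: the list of edges `l` is a path starting at the vertex `v`
(vertices are regarded as paths of length 0). -/
def IsPathFrom (v : G.V) : List G.E → Prop
  | [] => True
  | e :: l => G.src e = v ∧ IsPathFrom (G.rng e) l

/-- The range of the path starting at `v` with edge list `l`. -/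
def pathEnd (v : G.V) : List G.E → G.V
  | [] => v
  | e :: l => pathEnd (G.rng e) l

/-- `S_α` for a path `α` starting at `v` with edge list `l`: the product
`S_{α₁} ⋯ S_{αₙ}` for paths of positive length, and `S_v := P v` for the path of
length 0. -/
def sPath {A : Type*} [NonUnitalCStarAlgebra A] (P : G.V → A) (S : G.E → A) :
    G.V → List G.E → A
  | v, [] => P v
  | _, [e] => S e
  | _, e :: l => S e * sPath P S (G.rng e) l

end Digraph'

section AuxCK

open Digraph'

variable {G : Digraph'} {A : Type*} [NonUnitalCStarAlgebra A]
    [PartialOrder A] [StarOrderedRing A]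
    {P : G.V → A} {S : G.E → A} (hCK : G.IsCKFamily P S)
include hCK

/-- `S_e P_{r(e)} = S_e`. -/
lemma S_mul_P_rng (e : G.E) : S e * P (G.rng e) = S e := by
  have key : star (S e * P (G.rng e) - S e) * (S e * P (G.rng e) - S e) = 0 := by
    have h1 := hCK.ck1 e
    have h2 := hCK.proj_idem (G.rng e)
    have h3 := hCK.proj_star (G.rng e)
    have expand : star (S e * P (G.rng e) - S e) * (S e * P (G.rng e) - S e)
        = P (G.rng e) * (star (S e) * S e) * P (G.rng e)
          - P (G.rng e) * (star (S e) * S e)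
          - star (S e) * S e * P (G.rng e) + star (S e) * S e := by
      simp only [star_sub, star_mul, h3]
      noncomm_ring
    rw [expand, h1, h2, h2]
    abel
  have := (CStarRing.star_mul_self_eq_zero_iff _).mp key
  exact sub_eq_zero.mp this

/-- `S_e S_e^* S_e = S_e` (partial isometry). -/
lemma S_partial_isometry (e : G.E) : S e * star (S e) * S e = S e := by
  conv_rhs => rw [← S_mul_P_rng hCK e, ← hCK.ck1 e]
  noncomm_ring

/-- `P_{s(e)} S_e = S_e`. -/
lemma P_src_mul_S (e : G.E) : P (G.src e) * S e = S e := by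
  set p := P (G.src e) with hp
  have hps := hCK.proj_star (G.src e)
  have hpi := hCK.proj_idem (G.src e)
  have hqq : star (S e) * (S e * star (S e)) * S e = star (S e) * S e := by
    have : star (S e) * (S e * star (S e)) * S e
        = (star (S e) * S e) * (star (S e) * S e) := by noncomm_ring
    rw [this, hCK.ck1 e, hCK.proj_idem, ← hCK.ck1 e]
  have hpos : 0 ≤ star (S e) * p * S e - star (S e) * S e := by
    have h2 : 0 ≤ p - S e * star (S e) := sub_nonneg.mpr (hCK.ck2 e)
    have h3 := star_left_conjugate_nonneg h2 (S e)
    have : star (S e) * (p - S e * star (S e)) * S e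
        = star (S e) * p * S e - star (S e) * (S e * star (S e)) * S e := by
      noncomm_ring
    rw [this, hqq] at h3
    exact h3
  have key : star (p * S e - S e) * (p * S e - S e) = 0 := by
    have expand : star (p * S e - S e) * (p * S e - S e)
        = star (S e) * (p * p) * S e - star (S e) * p * S e
          - star (S e) * p * S e + star (S e) * S e := by
      simp only [star_sub, star_mul, hp, hps]
      noncomm_ring
    have hneg : star (p * S e - S e) * (p * S e - S e)
        = -(star (S e) * p * S e - star (S e) * S e) := by
      rw [expand, hpi]; abel
    have h0 : star (p * S e - S e) * (p * S e - S e) ≤ 0 := by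
      rw [hneg]; exact neg_nonpos.mpr hpos
    exact le_antisymm h0 (star_mul_self_nonneg _)
  exact sub_eq_zero.mp ((CStarRing.star_mul_self_eq_zero_iff _).mp key)

/-- `S_e^* S_f = 0` for `e ≠ f`. -/
lemma Sstar_mul_S_ne (e f : G.E) (hef : e ≠ f) : star (S e) * S f = 0 := by
  have he := S_partial_isometry hCK e
  have hf := S_partial_isometry hCK f
  calc star (S e) * S f = star (S e * star (S e) * S e) * (S f * star (S f) * S f) := by
        rw [he, hf]
    _ = star (S e) * ((S e * star (S e)) * (S f * star (S f))) * S f := by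
        simp only [star_mul, star_star]; noncomm_ring
    _ = 0 := by rw [hCK.range_orth e f hef]; simp

/-- `P_v S_e = 0` for `v ≠ s(e)`. -/
lemma P_mul_S_ne (v : G.V) (e : G.E) (h : v ≠ G.src e) : P v * S e = 0 := by
  rw [← P_src_mul_S hCK e, ← mul_assoc, hCK.proj_orth v (G.src e) h, zero_mul]

lemma sPath_cons (a : G.V) (e : G.E) (l : List G.E) :
    G.sPath P S a (e :: l) = S e * G.sPath P S (G.rng e) l := by
  cases l with
  | nil => simp only [Digraph'.sPath]; rw [S_mul_P_rng hCK]
  | cons f l' => rfl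

lemma sPath_mem_adjoin (a : G.V) (l : List G.E) :
    G.sPath P S a l ∈ NonUnitalStarAlgebra.adjoin ℂ (Set.range S ∪ Set.range P) := by
  induction l generalizing a with
  | nil =>
    exact NonUnitalStarAlgebra.subset_adjoin ℂ _ (Set.mem_union_right _ ⟨a, rfl⟩)
  | cons e l ih =>
    rw [sPath_cons hCK]
    exact mul_mem (NonUnitalStarAlgebra.subset_adjoin ℂ _ (Set.mem_union_left _ ⟨e, rfl⟩)) (ih _)

lemma P_mul_sPath_self {a : G.V} {l : List G.E} (h : G.IsPathFrom a l) :
    P a * G.sPath P S a l = G.sPath P S a l := by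
  cases l with
  | nil => exact hCK.proj_idem a
  | cons e l' =>
    obtain ⟨h1, h2⟩ := h
    rw [sPath_cons hCK, ← mul_assoc, ← h1, P_src_mul_S hCK]

lemma P_mul_sPath_ne {a : G.V} {l : List G.E} (h : G.IsPathFrom a l) {w : G.V} (hw : w ≠ a) :
    P w * G.sPath P S a l = 0 := by
  cases l with
  | nil => exact hCK.proj_orth w a hw
  | cons e l' =>
    obtain ⟨h1, h2⟩ := h
    rw [sPath_cons hCK, ← mul_assoc, P_mul_S_ne hCK w e (h1 ▸ hw), zero_mul]

lemma sPath_mul_P_end {a : G.V} {l : List G.E} (h : G.IsPathFrom a l) :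
    G.sPath P S a l * P (G.pathEnd a l) = G.sPath P S a l := by
  induction l generalizing a with
  | nil => exact hCK.proj_idem a
  | cons e l' ih =>
    obtain ⟨h1, h2⟩ := h
    show G.sPath P S a (e :: l') * P (G.pathEnd (G.rng e) l') = _
    rw [sPath_cons hCK, mul_assoc, ih h2]

omit hCK in
lemma isPathFrom_append {a : G.V} {l : List G.E} (h : G.IsPathFrom a l) {e : G.E}
    (he : G.pathEnd a l = G.src e) :
    G.IsPathFrom a (l ++ [e]) ∧ G.pathEnd a (l ++ [e]) = G.rng e := by
  induction l generalizing a with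
  | nil =>
    refine ⟨⟨he.symm, trivial⟩, rfl⟩
  | cons f l' ih =>
    obtain ⟨h1, h2⟩ := h
    obtain ⟨ih1, ih2⟩ := ih h2 he
    exact ⟨⟨h1, ih1⟩, ih2⟩

lemma sPath_append_edge {a : G.V} {l : List G.E} (h : G.IsPathFrom a l) {e : G.E}
    (he : G.pathEnd a l = G.src e) :
    G.sPath P S a (l ++ [e]) = G.sPath P S a l * S e := by
  induction l generalizing a with
  | nil =>
    show G.sPath P S a [e] = P a * S e
    have : a = G.src e := he
    rw [this, P_src_mul_S hCK]
    rfl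
  | cons f l' ih =>
    obtain ⟨h1, h2⟩ := h
    show G.sPath P S a ((f :: l') ++ [e]) = _
    rw [List.cons_append, sPath_cons hCK, sPath_cons hCK, ih h2 he, mul_assoc]

end AuxCK
/-- For a hereditary set `H`, the closed two-sided ideal of `C*(S, P)`
generated by `{P v : v ∈ H}` is the closed linear span of
`{S_α P_v S_β* : v ∈ H, r(α) = r(β) = v}`. -/
theorem stmt_12 (G : Digraph') [Countable G.V] [Countable G.E]
    {A : Type*} [NonUnitalCStarAlgebra A] [PartialOrder A] [StarOrderedRing A]
    (P : G.V → A) (S : G.E → A) (hCK : G.IsCKFamily P S)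
    (H : Set G.V) (hH : G.Hereditary H) :
    closedIdealGenIn (cstarSP G P S) {x : A | ∃ v ∈ H, x = P v} =
      closure (Submodule.span ℂ
        {x : A | ∃ v ∈ H, ∃ (a : G.V) (α : List G.E) (b : G.V) (β : List G.E),
          G.IsPathFrom a α ∧ G.pathEnd a α = v ∧
          G.IsPathFrom b β ∧ G.pathEnd b β = v ∧
          x = G.sPath P S a α * P v * star (G.sPath P S b β)} : Set A) := by
  classical
  set X : Set A := {x : A | ∃ v ∈ H, ∃ (a : G.V) (α : List G.E) (b : G.V) (β : List G.E),
          G.IsPathFrom a α ∧ G.pathEnd a α = v ∧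
          G.IsPathFrom b β ∧ G.pathEnd b β = v ∧
          x = G.sPath P S a α * P v * star (G.sPath P S b β)} with hXdef
  set M : Submodule ℂ A := Submodule.span ℂ X with hMdef
  have memX : ∀ (v : G.V), v ∈ H → ∀ (a : G.V) (α : List G.E) (b : G.V) (β : List G.E),
      G.IsPathFrom a α → G.pathEnd a α = v → G.IsPathFrom b β → G.pathEnd b β = v →
      G.sPath P S a α * P v * star (G.sPath P S b β) ∈ X :=
    fun v hv a α b β h1 h2 h3 h4 => ⟨v, hv, a, α, b, β, h1, h2, h3, h4, rfl⟩
  -- X is star-closed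
  have starX : ∀ x ∈ X, star x ∈ X := by
    rintro x ⟨v, hv, a, α, b, β, h1, h2, h3, h4, rfl⟩
    have hst : star (G.sPath P S a α * P v * star (G.sPath P S b β))
        = G.sPath P S b β * P v * star (G.sPath P S a α) := by
      simp only [star_mul, star_star, hCK.proj_star, mul_assoc]
    rw [hst]
    exact memX v hv b β a α h3 h4 h1 h2
  have starM : ∀ y ∈ M, star y ∈ M := by
    intro y hy
    induction hy using Submodule.span_induction with
    | mem x hx => exact Submodule.subset_span (starX x hx)
    | zero => rw [star_zero]; exact zero_mem M
    | add x y _ _ ihx ihy => rw [star_add]; exact add_mem ihx ihy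
    | smul c x _ ihx => rw [star_smul]; exact Submodule.smul_mem _ _ ihx
  -- multiplication of a generator-type element with an element of X lands in M
  have hPmulX : ∀ (w : G.V) (x : A), x ∈ X → P w * x ∈ M := by
    rintro w x ⟨v, hv, a, α, b, β, h1, h2, h3, h4, rfl⟩
    by_cases hwa : w = a
    · subst hwa
      rw [← mul_assoc, ← mul_assoc, P_mul_sPath_self hCK h1]
      exact Submodule.subset_span (memX v hv w α b β h1 h2 h3 h4)
    · rw [← mul_assoc, ← mul_assoc, P_mul_sPath_ne hCK h1 hwa, zero_mul, zero_mul]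
      exact zero_mem M
  have hSmulX : ∀ (e : G.E) (x : A), x ∈ X → S e * x ∈ M := by
    rintro e x ⟨v, hv, a, α, b, β, h1, h2, h3, h4, rfl⟩
    by_cases hra : G.rng e = a
    · have hx' : S e * G.sPath P S a α = G.sPath P S (G.src e) (e :: α) := by
        rw [sPath_cons hCK, hra]
      rw [← mul_assoc, ← mul_assoc, hx']
      have hp1 : G.IsPathFrom (G.src e) (e :: α) := ⟨rfl, by rw [hra]; exact h1⟩
      have hp2 : G.pathEnd (G.src e) (e :: α) = v := by
        show G.pathEnd (G.rng e) α = v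
        rw [hra]; exact h2
      exact Submodule.subset_span (memX v hv (G.src e) (e :: α) b β hp1 hp2 h3 h4)
    · have hx0 : S e * G.sPath P S a α = 0 := by
        rw [← S_mul_P_rng hCK e, mul_assoc, P_mul_sPath_ne hCK h1 hra, mul_zero]
      rw [← mul_assoc, ← mul_assoc, hx0, zero_mul, zero_mul]
      exact zero_mem M
  have hSstarmulX : ∀ (e : G.E) (x : A), x ∈ X → star (S e) * x ∈ M := by
    rintro e x ⟨v, hv, a, α, b, β, h1, h2, h3, h4, rfl⟩
    cases α with
    | nil =>
      have hav : a = v := h2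
      subst hav
      by_cases hva : G.src e = a
      · -- the vertex r(e) is in H by heredity
        have hw : G.rng e ∈ H := hH hv (Relation.ReflTransGen.single ⟨e, hva, rfl⟩)
        have happ := isPathFrom_append h3 (by rw [h4, ← hva])
        have hsapp : G.sPath P S b (β ++ [e]) = G.sPath P S b β * S e :=
          sPath_append_edge hCK h3 (by rw [h4, ← hva])
        have hA : P a * S e = S e := by rw [← hva]; exact P_src_mul_S hCK e
        have hB : S e * P (G.rng e) = S e := S_mul_P_rng hCK e
        have h5 : star (S e) * P a = star (S e) := by
          conv_lhs => rw [← hCK.proj_star a, ← star_mul, hA]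
        have h6 : P (G.rng e) * star (S e) = star (S e) := by
          conv_lhs => rw [← hCK.proj_star (G.rng e), ← star_mul, hB]
        have hEq : star (S e) * (G.sPath P S a [] * P a * star (G.sPath P S b β))
            = G.sPath P S (G.rng e) [] * P (G.rng e) * star (G.sPath P S b (β ++ [e])) := by
          show star (S e) * (P a * P a * star (G.sPath P S b β))
              = P (G.rng e) * P (G.rng e) * star (G.sPath P S b (β ++ [e]))
          rw [hsapp, star_mul]
          calc star (S e) * (P a * P a * star (G.sPath P S b β))
              = star (S e) * P a * P a * star (G.sPath P S b β) := by noncomm_ring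
            _ = star (S e) * star (G.sPath P S b β) := by rw [h5, h5]
            _ = P (G.rng e) * P (G.rng e) * (star (S e) * star (G.sPath P S b β)) := by
                rw [← mul_assoc, hCK.proj_idem, h6]
        rw [hEq]
        exact Submodule.subset_span
          (memX (G.rng e) hw (G.rng e) [] b (β ++ [e]) trivial rfl happ.1 happ.2)
      · have h5 : star (S e) * P a = 0 := by
          conv_lhs => rw [← hCK.proj_star a, ← star_mul,
            P_mul_S_ne hCK a e (fun h => hva h.symm), star_zero]
        have : star (S e) * (G.sPath P S a [] * P a * star (G.sPath P S b β)) = 0 := by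
          show star (S e) * (P a * P a * star (G.sPath P S b β)) = 0
          calc star (S e) * (P a * P a * star (G.sPath P S b β))
              = star (S e) * P a * P a * star (G.sPath P S b β) := by noncomm_ring
            _ = 0 := by rw [h5, zero_mul, zero_mul]
        rw [this]; exact zero_mem M
    | cons f α' =>
      obtain ⟨hf1, hf2⟩ := h1
      by_cases hef : e = f
      · subst hef
        have hp2 : G.pathEnd (G.rng e) α' = v := h2
        have hEq : star (S e) * (G.sPath P S a (e :: α') * P v * star (G.sPath P S b β))
            = G.sPath P S (G.rng e) α' * P v * star (G.sPath P S b β) := by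
          rw [sPath_cons hCK]
          calc star (S e) * (S e * G.sPath P S (G.rng e) α' * P v * star (G.sPath P S b β))
              = (star (S e) * S e) * G.sPath P S (G.rng e) α' * P v
                  * star (G.sPath P S b β) := by noncomm_ring
            _ = _ := by rw [hCK.ck1 e, P_mul_sPath_self hCK hf2]
        rw [hEq]
        exact Submodule.subset_span (memX v hv (G.rng e) α' b β hf2 hp2 h3 h4)
      · have hEq : star (S e) * (G.sPath P S a (f :: α') * P v * star (G.sPath P S b β))
            = 0 := by
          rw [sPath_cons hCK]
          calc star (S e) * (S f * G.sPath P S (G.rng f) α' * P v * star (G.sPath P S b β))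
              = (star (S e) * S f) * G.sPath P S (G.rng f) α' * P v
                  * star (G.sPath P S b β) := by noncomm_ring
            _ = 0 := by rw [Sstar_mul_S_ne hCK e f hef, zero_mul, zero_mul, zero_mul]
        rw [hEq]; exact zero_mem M
  -- a "good" element multiplies M into M on both sides
  have hGoodMulM : ∀ t : A,
      ((∃ e, t = S e) ∨ (∃ e, t = star (S e)) ∨ (∃ w, t = P w)) →
      ∀ y ∈ M, t * y ∈ M ∧ y * t ∈ M := by
    have hleft : ∀ t : A,
        ((∃ e, t = S e) ∨ (∃ e, t = star (S e)) ∨ (∃ w, t = P w)) →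
        ∀ y ∈ M, t * y ∈ M := by
      intro t ht y hy
      induction hy using Submodule.span_induction with
      | mem x hx =>
        rcases ht with ⟨e, rfl⟩ | ⟨e, rfl⟩ | ⟨w, rfl⟩
        · exact hSmulX e x hx
        · exact hSstarmulX e x hx
        · exact hPmulX w x hx
      | zero => rw [mul_zero]; exact zero_mem M
      | add x y _ _ ihx ihy => rw [mul_add]; exact add_mem ihx ihy
      | smul c x _ ihx => rw [mul_smul_comm]; exact Submodule.smul_mem _ _ ihx
    intro t ht y hy
    refine ⟨hleft t ht y hy, ?_⟩
    have htstar : (∃ e, star t = S e) ∨ (∃ e, star t = star (S e)) ∨ (∃ w, star t = P w) := by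
      rcases ht with ⟨e, rfl⟩ | ⟨e, rfl⟩ | ⟨w, rfl⟩
      · exact Or.inr (Or.inl ⟨e, rfl⟩)
      · exact Or.inl ⟨e, by rw [star_star]⟩
      · exact Or.inr (Or.inr ⟨w, hCK.proj_star w⟩)
    have : star (star t * star y) ∈ M := starM _ (hleft _ htstar _ (starM y hy))
    rwa [star_mul, star_star, star_star] at this
  -- every element of the generated star-subalgebra multiplies M into M
  have hAdjMulM : ∀ b ∈ NonUnitalStarAlgebra.adjoin ℂ (Set.range S ∪ Set.range P),
      ∀ y ∈ M, b * y ∈ M ∧ y * b ∈ M := by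
    intro b hb
    induction hb using NonUnitalStarAlgebra.adjoin_induction with
    | mem t ht =>
      refine hGoodMulM t ?_
      rcases ht with ⟨e, rfl⟩ | ⟨w, rfl⟩
      · exact Or.inl ⟨e, rfl⟩
      · exact Or.inr (Or.inr ⟨w, rfl⟩)
    | add x y _ _ ihx ihy =>
      intro z hz
      constructor
      · rw [add_mul]; exact add_mem (ihx z hz).1 (ihy z hz).1
      · rw [mul_add]; exact add_mem (ihx z hz).2 (ihy z hz).2
    | zero => intro z hz; constructor <;> simp only [zero_mul, mul_zero] <;> exact zero_mem M
    | mul x y _ _ ihx ihy =>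
      intro z hz
      constructor
      · rw [mul_assoc]; exact (ihx _ (ihy z hz).1).1
      · rw [← mul_assoc]; exact (ihy _ (ihx z hz).2).2
    | smul c x _ ihx =>
      intro z hz
      constructor
      · rw [smul_mul_assoc]; exact Submodule.smul_mem _ _ (ihx z hz).1
      · rw [mul_smul_comm]; exact Submodule.smul_mem _ _ (ihx z hz).2
    | star x _ ihx =>
      intro z hz
      constructor
      · have : star (star z * x) ∈ M := starM _ (ihx _ (starM z hz)).2
        rwa [star_mul, star_star] at this
      · have : star (x * star z) ∈ M := starM _ (ihx _ (starM z hz)).1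
        rwa [star_mul, star_star] at this
  -- X is contained in the subalgebra
  have hXadj : X ⊆ (NonUnitalStarAlgebra.adjoin ℂ (Set.range S ∪ Set.range P) :
      NonUnitalStarSubalgebra ℂ A) := by
    rintro x ⟨v, hv, a, α, b, β, h1, h2, h3, h4, rfl⟩
    exact mul_mem (mul_mem (sPath_mem_adjoin hCK a α)
      (NonUnitalStarAlgebra.subset_adjoin ℂ _ (Set.mem_union_right _ ⟨v, rfl⟩)))
      (star_mem (sPath_mem_adjoin hCK b β))
  have hMadj : (M : Set A) ⊆ (NonUnitalStarAlgebra.adjoin ℂ (Set.range S ∪ Set.range P) :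
      NonUnitalStarSubalgebra ℂ A) := by
    intro y hy
    induction hy using Submodule.span_induction with
    | mem x hx => exact hXadj hx
    | zero => exact zero_mem _
    | add x y _ _ ihx ihy => exact add_mem ihx ihy
    | smul c x _ ihx => exact SMulMemClass.smul_mem c ihx
  -- the closure of M is a closed two-sided ideal of cstarSP containing the generators
  have hJideal : IsClosedIdealOf (cstarSP G P S) (closure (M : Set A)) := by
    refine ⟨closure_mono hMadj, isClosed_closure, subset_closure (zero_mem M), ?_, ?_, ?_⟩
    · intro x y hx hy
      have hcoe : closure (M : Set A) = (M.topologicalClosure : Set A) :=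
        (Submodule.topologicalClosure_coe M).symm
      rw [hcoe] at hx hy ⊢
      exact add_mem hx hy
    · intro c x hx
      have hcoe : closure (M : Set A) = (M.topologicalClosure : Set A) :=
        (Submodule.topologicalClosure_coe M).symm
      rw [hcoe] at hx ⊢
      exact Submodule.smul_mem _ c hx
    · intro b x hb hx
      constructor
      · exact map_mem_closure₂ continuous_mul hb hx
          (fun u hu z hz => (hAdjMulM u hu z hz).1)
      · exact map_mem_closure₂ continuous_mul hx hb
          (fun z hz u hu => (hAdjMulM u hu z hz).2)
  have hPvX : ∀ v ∈ H, P v ∈ X := by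
    intro v hv
    have h0 := memX v hv v [] v [] trivial rfl trivial rfl
    have : G.sPath P S v [] * P v * star (G.sPath P S v []) = P v := by
      show P v * P v * star (P v) = P v
      rw [hCK.proj_star, hCK.proj_idem, hCK.proj_idem]
    rwa [this] at h0
  have hgen : {x : A | ∃ v ∈ H, x = P v} ⊆ closure (M : Set A) := by
    rintro x ⟨v, hv, rfl⟩
    exact subset_closure (Submodule.subset_span (hPvX v hv))
  apply subset_antisymm
  · exact Set.sInter_subset_of_mem ⟨hJideal, hgen⟩
  · refine Set.subset_sInter ?_
    rintro J ⟨⟨hJB, hJclosed, hJ0, hJadd, hJsmul, hJmul⟩, hJgen⟩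
    have hXJ : X ⊆ J := by
      rintro x ⟨v, hv, a, α, b, β, h1, h2, h3, h4, rfl⟩
      have hPv : P v ∈ J := hJgen ⟨v, hv, rfl⟩
      have hsa : G.sPath P S a α ∈ cstarSP G P S :=
        subset_closure (sPath_mem_adjoin hCK a α)
      have hsb : star (G.sPath P S b β) ∈ cstarSP G P S :=
        subset_closure (star_mem (sPath_mem_adjoin hCK b β))
      have h5 : G.sPath P S a α * P v ∈ J := (hJmul _ _ hsa hPv).1
      exact (hJmul _ _ hsb h5).2
    have hMJ : (M : Set A) ⊆ J := by
      intro y hy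
      induction hy using Submodule.span_induction with
      | mem x hx => exact hXJ hx
      | zero => exact hJ0
      | add x y _ _ ihx ihy => exact hJadd x y ihx ihy
      | smul c x _ ihx => exact hJsmul c x ihx
    exact closure_minimal hMJ hJclosed
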